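/- Let B be the k-algebra k⟨v_1, v_2⟩/(v_1^4, v_1v_2 + λ v_2v_1, v_1^2 + 2λ v_2^2) where λ ∈ {1, -1} and k has characteristic zero. Then B has dimension 8, with basis {v_1^m v_2^n : 0 ≤ m ≤ 3, 0 ≤ n ≤ 1}. -/

import Mathlib

/- Relations of the Nichols algebra
`B = k⟨v₁,v₂⟩/(v₁⁴, v₁v₂ + λv₂v₁, v₁² + 2λv₂²)`,
with generators v₁ (= 0) and v₂ (= 1). -/
inductive BRel' (k : Type*) [Field k] (lam : k) :
    FreeAlgebra k (Fin 2) → FreeAlgebra k (Fin 2) → Prop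
  | r1 : BRel' k lam ((FreeAlgebra.ι k (0 : Fin 2)) ^ 4) 0
  | r2 : BRel' k lam (FreeAlgebra.ι k (0 : Fin 2) * FreeAlgebra.ι k (1 : Fin 2))
      (-(lam • (FreeAlgebra.ι k (1 : Fin 2) * FreeAlgebra.ι k (0 : Fin 2))))
  | r3 : BRel' k lam ((FreeAlgebra.ι k (0 : Fin 2)) ^ 2)
      (-((2 * lam) • ((FreeAlgebra.ι k (1 : Fin 2)) ^ 2)))


namespace Stmt14Aux
variable {k : Type*} [Field k] [CharZero k] (lam : k)

def L1 : ((Fin 4 × Fin 2) → k) →ₗ[k] ((Fin 4 × Fin 2) → k) where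
  toFun x p := if (p.1 : ℕ) = 0 then 0 else x (p.1 - 1, p.2)
  map_add' x y := by funext p; dsimp only [Pi.add_apply]; split_ifs <;> simp
  map_smul' c x := by funext p; dsimp only [Pi.smul_apply, RingHom.id_apply]; split_ifs <;> simp

def L2 : ((Fin 4 × Fin 2) → k) →ₗ[k] ((Fin 4 × Fin 2) → k) where
  toFun x p :=
    if p.2 = 0 then
      (if (p.1 : ℕ) < 2 then 0 else ((-lam) ^ ((p.1 : ℕ) - 1) / 2) * x (p.1 - 2, 1))
    else (-lam) ^ (p.1 : ℕ) * x (p.1, 0)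
  map_add' x y := by
    funext p; dsimp only [Pi.add_apply]; split_ifs <;> ring
  map_smul' c x := by
    funext p; dsimp only [Pi.smul_apply, RingHom.id_apply, smul_eq_mul]; split_ifs <;> ring

@[simp] lemma L1_apply (x : (Fin 4 × Fin 2) → k) (p : Fin 4 × Fin 2) :
    L1 x p = if (p.1 : ℕ) = 0 then 0 else x (p.1 - 1, p.2) := rfl

@[simp] lemma L2_apply (x : (Fin 4 × Fin 2) → k) (p : Fin 4 × Fin 2) :
    L2 lam x p =
      if p.2 = 0 then
        (if (p.1 : ℕ) < 2 then 0 else ((-lam) ^ ((p.1 : ℕ) - 1) / 2) * x (p.1 - 2, 1))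
      else (-lam) ^ (p.1 : ℕ) * x (p.1, 0) := rfl

variable (hlam : lam = 1 ∨ lam = -1)

lemma rel1 : (L1 : Module.End k _) ^ 4 = 0 := by
  ext x p
  obtain ⟨a, b⟩ := p
  fin_cases a <;> fin_cases b <;>
    simp +decide [pow_succ, Module.End.mul_apply]

include hlam in
lemma rel2 : (L1 : Module.End k _) * L2 lam = -(lam • ((L2 lam : Module.End k _) * L1)) := by
  ext x p
  obtain ⟨a, b⟩ := p
  rcases hlam with h | h <;> subst h <;> fin_cases a <;> fin_cases b <;>
    (simp +decide [Module.End.mul_apply, LinearMap.neg_apply, LinearMap.smul_apply,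
      Pi.neg_apply, Pi.smul_apply, smul_eq_mul]; try norm_num) <;> try ring

include hlam in
lemma rel3 : (L1 : Module.End k _) ^ 2 = -((2 * lam) • ((L2 lam : Module.End k _) ^ 2)) := by
  ext x p
  obtain ⟨a, b⟩ := p
  rcases hlam with h | h <;> subst h <;> fin_cases a <;> fin_cases b <;>
    (simp +decide [pow_succ, Module.End.mul_apply, LinearMap.neg_apply, LinearMap.smul_apply,
      Module.End.one_apply, Pi.neg_apply, Pi.smul_apply, smul_eq_mul]; try norm_num) <;>
      (try ring) <;> (field_simp; try ring)

variable (k) in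
def phi : FreeAlgebra k (Fin 2) →ₐ[k] Module.End k ((Fin 4 × Fin 2) → k) :=
  FreeAlgebra.lift k ![L1, L2 lam]

@[simp] lemma phi_i0 : phi k lam (FreeAlgebra.ι k (0 : Fin 2)) = L1 := by
  simp [phi]

@[simp] lemma phi_i1 : phi k lam (FreeAlgebra.ι k (1 : Fin 2)) = L2 lam := by
  simp [phi]

include hlam in
lemma phi_rel : ∀ ⦃x y : FreeAlgebra k (Fin 2)⦄, BRel' k lam x y → phi k lam x = phi k lam y := by
  intro x y h
  induction h with
  | r1 => rw [map_pow, map_zero, phi_i0]; exact rel1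
  | r2 => simpa [map_mul, map_smul] using rel2 lam hlam
  | r3 => simpa [map_pow, map_smul] using rel3 lam hlam

section Main

variable (k) in
noncomputable def Phi (hlam : lam = 1 ∨ lam = -1) :
    RingQuot (BRel' k lam) →ₐ[k] Module.End k ((Fin 4 × Fin 2) → k) :=
  RingQuot.liftAlgHom k ⟨phi k lam, phi_rel lam hlam⟩

set_option maxHeartbeats 1000000 in
theorem main (hlam : lam = 1 ∨ lam = -1) :
    Module.finrank k (RingQuot (BRel' k lam)) = 8 ∧
    ∃ bB : Module.Basis (Fin 4 × Fin 2) k (RingQuot (BRel' k lam)),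
      ∀ p : Fin 4 × Fin 2, bB p =
        RingQuot.mkAlgHom k (BRel' k lam) (FreeAlgebra.ι k (0 : Fin 2)) ^ (p.1 : ℕ) *
        RingQuot.mkAlgHom k (BRel' k lam) (FreeAlgebra.ι k (1 : Fin 2)) ^ (p.2 : ℕ) := by
  have hlam2 : lam * lam = 1 := by rcases hlam with h | h <;> subst h <;> norm_num
  have nmul : ∀ a b : RingQuot (BRel' k lam), -a * b = -(a * b) := fun a b => neg_mul a b
  have mnul : ∀ a b : RingQuot (BRel' k lam), a * -b = -(a * b) := fun a b => mul_neg a b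
  have snul : ∀ (c : k) (a : RingQuot (BRel' k lam)), c • (-a) = -(c • a) :=
    fun c a => smul_neg c a
  have nsmul' : ∀ (c : k) (a : RingQuot (BRel' k lam)), (-c) • a = -(c • a) :=
    fun c a => neg_smul c a
  set mk := RingQuot.mkAlgHom k (BRel' k lam) with hmk
  set x1 := mk (FreeAlgebra.ι k (0 : Fin 2)) with hx1
  set x2 := mk (FreeAlgebra.ι k (1 : Fin 2)) with hx2
  set f : Fin 4 × Fin 2 → RingQuot (BRel' k lam) := fun p => x1 ^ (p.1 : ℕ) * x2 ^ (p.2 : ℕ) with hf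
  -- relations in R
  have hr1 : x1 ^ 4 = 0 := by
    have := RingQuot.mkAlgHom_rel k (BRel'.r1 (k := k) (lam := lam))
    simpa [map_pow] using this
  have hr2 : x1 * x2 = -(lam • (x2 * x1)) := by
    have := RingQuot.mkAlgHom_rel k (BRel'.r2 (k := k) (lam := lam))
    simpa [map_mul, map_smul] using this
  have hr3 : x1 ^ 2 = -((2 * lam) • x2 ^ 2) := by
    have := RingQuot.mkAlgHom_rel k (BRel'.r3 (k := k) (lam := lam))
    simpa [map_pow, map_smul] using this
  have hc : x2 * x1 = -(lam • (x1 * x2)) := by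
    rw [hr2, smul_neg, smul_smul, hlam2, one_smul, neg_neg]
  have hsq : x2 ^ 2 = -((lam / 2) • x1 ^ 2) := by
    rw [hr3, smul_neg, smul_smul, neg_neg]
    rw [show lam / 2 * (2 * lam) = lam * lam * (2 / 2) by ring, hlam2]
    norm_num
  have hcomm : ∀ m : ℕ, x2 * x1 ^ m = ((-lam) ^ m) • (x1 ^ m * x2) := by
    intro m
    induction m with
    | zero => simp
    | succ n ih =>
      calc x2 * x1 ^ (n + 1) = (x2 * x1) * x1 ^ n := by rw [pow_succ', ← mul_assoc]
        _ = -(lam • (x1 * (x2 * x1 ^ n))) := by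
              rw [hc, nmul, smul_mul_assoc, mul_assoc]
        _ = -(lam • (x1 * (((-lam) ^ n) • (x1 ^ n * x2)))) := by rw [ih]
        _ = ((-lam) ^ (n + 1)) • (x1 ^ (n + 1) * x2) := by
            rw [mul_smul_comm, smul_smul, ← nsmul']
            congr 1
            · ring
            · rw [pow_succ', mul_assoc]
  -- spanning set
  set S : Submodule k (RingQuot (BRel' k lam)) := Submodule.span k (Set.range f) with hS
  have hmem : ∀ p, f p ∈ S := fun p => Submodule.subset_span ⟨p, rfl⟩
  have hone : (1 : RingQuot (BRel' k lam)) ∈ S := by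
    have := hmem (0, 0); simpa [hf] using this
  have hbig : ∀ m : ℕ, 4 ≤ m → x1 ^ m = 0 := by
    intro m hm
    have : x1 ^ m = x1 ^ 4 * x1 ^ (m - 4) := by rw [← pow_add]; congr 1; omega
    rw [this, hr1, zero_mul]
  have hmul1 : ∀ m n : ℕ, n ≤ 1 → x1 ^ m * x2 ^ n ∈ S := by
    intro m n hn
    by_cases h4 : m ≤ 3
    · exact Submodule.subset_span ⟨(⟨m, by omega⟩, ⟨n, by omega⟩), rfl⟩
    · rw [hbig m (by omega), zero_mul]; exact S.zero_mem
  have hx1f : ∀ p, x1 * f p ∈ S := by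
    rintro ⟨a, b⟩
    have h : x1 * f (a, b) = x1 ^ ((a : ℕ) + 1) * x2 ^ (b : ℕ) := by
      rw [hf]; dsimp only; rw [← mul_assoc, ← pow_succ']
    rw [h]
    exact hmul1 _ _ (by omega)
  have hx2f : ∀ p, x2 * f p ∈ S := by
    rintro ⟨a, b⟩
    have hblt := b.isLt
    have hb01 : (b : ℕ) = 0 ∨ (b : ℕ) = 1 := by omega
    rcases hb01 with hb | hb
    · have h : x2 * f (a, b) = ((-lam) ^ (a : ℕ)) • (x1 ^ (a : ℕ) * x2 ^ 1) := by
        rw [hf]; dsimp only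
        rw [hb, pow_zero, mul_one, hcomm, pow_one]
      rw [h]
      exact S.smul_mem _ (hmul1 _ _ le_rfl)
    · have h : x2 * f (a, b) =
          -((((-lam) ^ (a : ℕ)) * (lam / 2)) • (x1 ^ ((a : ℕ) + 2) * x2 ^ 0)) := by
        rw [hf]; dsimp only
        rw [hb, pow_one, ← mul_assoc, hcomm, smul_mul_assoc, mul_assoc, ← pow_two, hsq,
          mnul, snul, mul_smul_comm, smul_smul, ← pow_add, pow_zero, mul_one]
      rw [h]
      exact S.neg_mem (S.smul_mem _ (hmul1 _ _ (by omega)))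
  have hSmulx : ∀ i : Fin 2, ∀ s ∈ S, mk (FreeAlgebra.ι k i) * s ∈ S := by
    intro i s hs
    induction hs using Submodule.span_induction with
    | mem z hz =>
      obtain ⟨p, rfl⟩ := hz
      fin_cases i
      · exact hx1f p
      · exact hx2f p
    | zero => rw [mul_zero]; exact S.zero_mem
    | add a b _ _ ha hb => rw [mul_add]; exact S.add_mem ha hb
    | smul c a _ ha => rw [mul_smul_comm]; exact S.smul_mem c ha
  have hkey : ∀ a : FreeAlgebra k (Fin 2), ∀ s ∈ S, mk a * s ∈ S := by
    intro a
    induction a using FreeAlgebra.induction with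
    | grade0 r => intro s hs; rw [AlgHom.commutes, ← Algebra.smul_def]; exact S.smul_mem r hs
    | grade1 i => exact hSmulx i
    | mul a b ha hb => intro s hs; rw [map_mul, mul_assoc]; exact ha _ (hb _ hs)
    | add a b ha hb => intro s hs; rw [map_add, add_mul]; exact S.add_mem (ha _ hs) (hb _ hs)
  have htop : ∀ z : RingQuot (BRel' k lam), z ∈ S := by
    intro z
    obtain ⟨a, rfl⟩ := RingQuot.mkAlgHom_surjective k (BRel' k lam) z
    simpa using hkey a 1 hone
  -- linear independence
  set e0 : (Fin 4 × Fin 2) → k := Pi.single ((0 : Fin 4), (0 : Fin 2)) 1 with he0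
  set Φ := Phi k lam hlam with hΦdef
  have hΦ1 : Φ x1 = L1 := by
    rw [hΦdef, hx1, hmk, Phi, RingQuot.liftAlgHom_mkAlgHom_apply, phi_i0]
  have hΦ2 : Φ x2 = L2 lam := by
    rw [hΦdef, hx2, hmk, Phi, RingQuot.liftAlgHom_mkAlgHom_apply, phi_i1]
  set Ψ : RingQuot (BRel' k lam) →ₗ[k] ((Fin 4 × Fin 2) → k) :=
    (LinearMap.applyₗ e0).comp Φ.toLinearMap with hΨdef
  have hΨf : ∀ p, Ψ (f p) = Pi.single p (1 : k) := by
    rintro ⟨a, b⟩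
    have h : Ψ (f (a, b)) =
        ((L1 ^ (a : ℕ) * L2 lam ^ (b : ℕ) : Module.End k ((Fin 4 × Fin 2) → k))) e0 := by
      rw [hΨdef, hf]; dsimp only [LinearMap.comp_apply, AlgHom.toLinearMap_apply]
      rw [map_mul, map_pow, map_pow, hΦ1, hΦ2]
      rfl
    rw [h]
    funext q
    obtain ⟨c, d⟩ := q
    fin_cases a <;> fin_cases b <;> fin_cases c <;> fin_cases d <;>
      simp +decide [pow_succ, Module.End.mul_apply, Module.End.one_apply, he0, Pi.single_apply]
  have hind : LinearIndependent k f := by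
    have hb : ⇑(Pi.basisFun k (Fin 4 × Fin 2)) = fun p => Pi.single p (1 : k) := by
      funext p; simp
    have h2 : LinearIndependent k (⇑Ψ ∘ f) := by
      have he : ⇑Ψ ∘ f = fun p => Pi.single p (1 : k) := funext hΨf
      rw [he, ← hb]
      exact (Pi.basisFun k (Fin 4 × Fin 2)).linearIndependent
    exact h2.of_comp Ψ
  have hspan : ⊤ ≤ Submodule.span k (Set.range f) := fun z _ => htop z
  refine ⟨?_, Module.Basis.mk hind hspan, fun p => Module.Basis.mk_apply hind hspan p⟩
  rw [Module.finrank_eq_card_basis (Module.Basis.mk hind hspan)]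
  simp

end Main

end Stmt14Aux

/-- `B = k⟨v₁,v₂⟩/(v₁⁴, v₁v₂ + λv₂v₁, v₁² + 2λv₂²)` with `λ = ±1` has
dimension 8, with basis `{v₁^m v₂^n : 0 ≤ m ≤ 3, 0 ≤ n ≤ 1}`. -/
theorem stmt14 (k : Type*) [Field k] [CharZero k]
    (lam : k) (hlam : lam = 1 ∨ lam = -1) :
    Module.finrank k (RingQuot (BRel' k lam)) = 8 ∧
    ∃ bB : Module.Basis (Fin 4 × Fin 2) k (RingQuot (BRel' k lam)),
      ∀ p : Fin 4 × Fin 2, bB p =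
        RingQuot.mkAlgHom k (BRel' k lam) (FreeAlgebra.ι k (0 : Fin 2)) ^ (p.1 : ℕ) *
        RingQuot.mkAlgHom k (BRel' k lam) (FreeAlgebra.ι k (1 : Fin 2)) ^ (p.2 : ℕ) := by
  exact Stmt14Aux.main lam hlam
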